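/- Let (X, γ) be a generalized Minkowski space, let p₁, …, pₙ ∈ X, and let f : X → ℝ, f(x) = Σᵢ₌₁ⁿ γ(pᵢ − x). If x̄ ∈ X \ {p₁, …, pₙ}, then x̄ is a minimum point of f if and only if, for every i ∈ {1, …, n}, there exists a γ-norming functional φᵢ of pᵢ − x̄ such that Σᵢ₌₁ⁿ φᵢ = 0. -/

import Mathlib

set_option maxHeartbeats 1000000


/-- A gauge on a real vector space: nonnegative, definite at `0`, positively homogeneous,
and subadditive. -/
def IsGauge {X : Type*} [AddCommGroup X] [Module ℝ X] (γ : X → ℝ) : Prop :=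
  (∀ x, 0 ≤ γ x) ∧ (∀ x : X, γ x = 0 → x = 0) ∧
    (∀ (l : ℝ) (x : X), 0 ≤ l → γ (l • x) = l * γ x) ∧
    ∀ x y, γ (x + y) ≤ γ x + γ y

/-- The polar function of a gauge, `γ°(φ) = sup {φ x : γ x ≤ 1}`. -/
noncomputable def gaugePolar {X : Type*} [AddCommGroup X] [Module ℝ X]
    (γ : X → ℝ) (φ : X →ₗ[ℝ] ℝ) : ℝ :=
  sSup (φ '' {x | γ x ≤ 1})

/-- `φ` is a `γ`-norming functional of `x`: `γ°(φ) = 1` and `φ x = γ x`. -/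
def IsNormingFunctional {X : Type*} [AddCommGroup X] [Module ℝ X]
    (γ : X → ℝ) (φ : X →ₗ[ℝ] ℝ) (x : X) : Prop :=
  gaugePolar γ φ = 1 ∧ φ x = γ x


open Set

section aux
variable {X : Type*} [AddCommGroup X] [Module ℝ X] {γ : X → ℝ}

lemma ggauge_zero (hγ : IsGauge γ) : γ 0 = 0 := by
  have := hγ.2.2.1 0 0 le_rfl
  simpa using this

lemma ggauge_pos (hγ : IsGauge γ) {x : X} (hx : x ≠ 0) : 0 < γ x :=
  lt_of_le_of_ne (hγ.1 x) fun h => hx (hγ.2.1 x h.symm)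

/-- The difference quotient of `γ` at `z` in direction `v`. -/
noncomputable def gq (γ : X → ℝ) (z v : X) (t : ℝ) : ℝ := (γ (z + t • v) - γ z) / t

lemma gq_mono (hγ : IsGauge γ) (z v : X) {s t : ℝ} (hs : 0 < s) (hst : s ≤ t) :
    gq γ z v s ≤ gq γ z v t := by
  have ht : 0 < t := hs.trans_le hst
  have hcoef : (0:ℝ) ≤ s / t := div_nonneg hs.le ht.le
  have hcoef' : (0:ℝ) ≤ 1 - s / t := by
    rw [sub_nonneg]
    exact div_le_one_of_le₀ hst ht.le
  have hdecomp : z + s • v = (s / t) • (z + t • v) + (1 - s / t) • z := by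
    have hst' : (s / t) * t = s := div_mul_cancel₀ s ht.ne'
    rw [smul_add, smul_smul, hst']
    module
  have key : γ (z + s • v) ≤ (s / t) * γ (z + t • v) + (1 - s / t) * γ z := by
    rw [hdecomp]
    calc γ ((s / t) • (z + t • v) + (1 - s / t) • z)
        ≤ γ ((s / t) • (z + t • v)) + γ ((1 - s / t) • z) := hγ.2.2.2 _ _
      _ = (s / t) * γ (z + t • v) + (1 - s / t) * γ z := by
          rw [hγ.2.2.1 _ _ hcoef, hγ.2.2.1 _ _ hcoef']
  rw [gq, gq, div_le_div_iff₀ hs ht]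
  have h2 : (γ (z + s • v) - γ z) ≤ (s / t) * (γ (z + t • v) - γ z) := by
    have e : (s / t) * (γ (z + t • v) - γ z)
        = (s / t) * γ (z + t • v) + (1 - s / t) * γ z - γ z := by ring
    rw [e]; linarith [key]
  calc (γ (z + s • v) - γ z) * t ≤ ((s / t) * (γ (z + t • v) - γ z)) * t :=
        mul_le_mul_of_nonneg_right h2 ht.le
    _ = (γ (z + t • v) - γ z) * s := by field_simp

/-- one-sided directional derivative of `γ` at `z` in direction `v`, as inf of slopes. -/
noncomputable def dirD (γ : X → ℝ) (z v : X) : ℝ := sInf (gq γ z v '' Ioi 0)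

lemma gq_lower (hγ : IsGauge γ) (z v : X) {t : ℝ} (ht : 0 < t) : -γ (-v) ≤ gq γ z v t := by
  have h1 : γ z ≤ γ (z + t • v) + t * γ (-v) := by
    have := hγ.2.2.2 (z + t • v) (t • (-v))
    have h2 : γ (t • (-v)) = t * γ (-v) := hγ.2.2.1 _ _ ht.le
    have h3 : z + t • v + t • (-v) = z := by module
    rw [h3, h2] at this
    exact this
  rw [gq, le_div_iff₀ ht]
  nlinarith [hγ.1 (-v)]

lemma dirD_bddBelow (hγ : IsGauge γ) (z v : X) : BddBelow (gq γ z v '' Ioi 0) := by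
  refine ⟨-γ (-v), ?_⟩
  rintro a ⟨t, ht, rfl⟩
  exact gq_lower hγ z v ht

lemma dirD_ne : (gq γ z v '' Ioi 0).Nonempty := ⟨gq γ z v 1, 1, by norm_num, rfl⟩

lemma dirD_le (hγ : IsGauge γ) (z v : X) {t : ℝ} (ht : 0 < t) : dirD γ z v ≤ gq γ z v t :=
  csInf_le (dirD_bddBelow hγ z v) ⟨t, ht, rfl⟩

lemma le_dirD (hγ : IsGauge γ) {z v : X} {c : ℝ} (h : ∀ t : ℝ, 0 < t → c ≤ gq γ z v t) :
    c ≤ dirD γ z v :=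
  le_csInf dirD_ne (by rintro a ⟨t, ht, rfl⟩; exact h t ht)

lemma dirD_le_gauge (hγ : IsGauge γ) (z v : X) : dirD γ z v ≤ γ v := by
  have := dirD_le hγ z v (t := 1) one_pos
  rw [gq] at this
  simp only [one_smul, div_one] at this
  linarith [hγ.2.2.2 z v, this]

lemma dirD_self (hγ : IsGauge γ) (z : X) : dirD γ z z = γ z := by
  have hq : ∀ t : ℝ, 0 < t → gq γ z z t = γ z := by
    intro t ht
    rw [gq]
    have h1 : z + t • z = (1 + t) • z := by module
    rw [h1, hγ.2.2.1 _ _ (by linarith)]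
    field_simp
    ring
  refine le_antisymm ?_ (le_dirD hγ fun t ht => (hq t ht).ge)
  have := dirD_le hγ z z (t := 1) one_pos
  rwa [hq 1 one_pos] at this

lemma dirD_neg_self (hγ : IsGauge γ) (z : X) : dirD γ z (-z) = -γ z := by
  refine le_antisymm ?_ ?_
  · have := dirD_le hγ z (-z) (t := 1) one_pos
    rw [gq] at this
    simp only [one_smul, add_neg_cancel, div_one] at this
    rw [ggauge_zero hγ] at this
    linarith
  · refine le_dirD hγ fun t ht => ?_
    rw [gq, le_div_iff₀ ht]
    have h1 : z + t • (-z) = (1 - t) • z := by module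
    rw [h1]
    rcases le_total t 1 with h | h
    · rw [hγ.2.2.1 _ _ (by linarith)]
      nlinarith [hγ.1 z]
    · have h2 : (1 - t) • z = (t - 1) • (-z) := by module
      rw [h2, hγ.2.2.1 _ _ (by linarith)]
      nlinarith [hγ.1 (-z), hγ.1 z]

lemma dirD_zero (hγ : IsGauge γ) (z : X) : dirD γ z 0 = 0 := by
  have hq : ∀ t : ℝ, 0 < t → gq γ z 0 t = 0 := by
    intro t ht; rw [gq]; simp
  refine le_antisymm ?_ (le_dirD hγ fun t ht => (hq t ht).ge)
  have := dirD_le hγ z 0 (t := 1) one_pos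
  rwa [hq 1 one_pos] at this

lemma dirD_smul_le (hγ : IsGauge γ) (z v : X) {c : ℝ} (hc : 0 < c) :
    dirD γ z (c • v) ≤ c * dirD γ z v := by
  rw [← div_le_iff₀' hc]
  refine le_dirD hγ fun t ht => ?_
  rw [div_le_iff₀' hc]
  have key : gq γ z (c • v) (t / c) = c * gq γ z v t := by
    rw [gq, gq]
    have h1 : z + (t / c) • c • v = z + t • v := by
      rw [smul_smul, div_mul_cancel₀ t hc.ne']
    rw [h1]
    field_simp
  calc dirD γ z (c • v) ≤ gq γ z (c • v) (t / c) := dirD_le hγ _ _ (div_pos ht hc)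
    _ = c * gq γ z v t := key

lemma dirD_smul (hγ : IsGauge γ) (z v : X) {c : ℝ} (hc : 0 < c) :
    dirD γ z (c • v) = c * dirD γ z v := by
  refine le_antisymm (dirD_smul_le hγ z v hc) ?_
  have h2 := dirD_smul_le hγ z (c • v) (c := c⁻¹) (by positivity)
  rw [smul_smul, inv_mul_cancel₀ hc.ne', one_smul] at h2
  calc c * dirD γ z v ≤ c * (c⁻¹ * dirD γ z (c • v)) := by
        exact mul_le_mul_of_nonneg_left h2 hc.le
    _ = dirD γ z (c • v) := by field_simp

lemma dirD_add (hγ : IsGauge γ) (z u v : X) :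
    dirD γ z (u + v) ≤ dirD γ z u + dirD γ z v := by
  refine le_of_forall_pos_le_add fun ε hε => ?_
  obtain ⟨a, ⟨s, hs, rfl⟩, has⟩ := exists_lt_of_csInf_lt (dirD_ne (z := z) (v := u))
    (show dirD γ z u < dirD γ z u + ε / 2 by linarith)
  obtain ⟨b, ⟨t, ht, rfl⟩, hbt⟩ := exists_lt_of_csInf_lt (dirD_ne (z := z) (v := v))
    (show dirD γ z v < dirD γ z v + ε / 2 by linarith)
  set r := min s t with hr
  have hrpos : 0 < r := lt_min hs ht
  have hqu : gq γ z u r ≤ gq γ z u s := gq_mono hγ z u hrpos (min_le_left s t)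
  have hqv : gq γ z v r ≤ gq γ z v t := gq_mono hγ z v hrpos (min_le_right s t)
  have key : gq γ z (u + v) (r / 2) ≤ gq γ z u r + gq γ z v r := by
    rw [gq, gq, gq, div_le_iff₀ (by positivity)]
    have hdecomp : z + (r / 2) • (u + v) = (2:ℝ)⁻¹ • (z + r • u) + (2:ℝ)⁻¹ • (z + r • v) := by
      module
    have hsub : γ (z + (r / 2) • (u + v)) ≤
        (2:ℝ)⁻¹ * γ (z + r • u) + (2:ℝ)⁻¹ * γ (z + r • v) := by
      rw [hdecomp]
      calc γ ((2:ℝ)⁻¹ • (z + r • u) + (2:ℝ)⁻¹ • (z + r • v))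
          ≤ γ ((2:ℝ)⁻¹ • (z + r • u)) + γ ((2:ℝ)⁻¹ • (z + r • v)) := hγ.2.2.2 _ _
        _ = (2:ℝ)⁻¹ * γ (z + r • u) + (2:ℝ)⁻¹ * γ (z + r • v) := by
            rw [hγ.2.2.1 _ _ (by norm_num), hγ.2.2.1 _ _ (by norm_num)]
    have h2 : ((γ (z + r • u) - γ z) / r + (γ (z + r • v) - γ z) / r) * (r / 2)
        = (2:ℝ)⁻¹ * γ (z + r • u) + (2:ℝ)⁻¹ * γ (z + r • v) - γ z := by
      field_simp
      ring
    rw [h2]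
    linarith
  calc dirD γ z (u + v) ≤ gq γ z (u + v) (r / 2) := dirD_le hγ _ _ (by positivity)
    _ ≤ gq γ z u r + gq γ z v r := key
    _ ≤ gq γ z u s + gq γ z v t := add_le_add hqu hqv
    _ ≤ dirD γ z u + dirD γ z v + ε := by linarith

end aux

section aux2
variable {X : Type*} [AddCommGroup X] [Module ℝ X] {γ : X → ℝ}

/-- Key Hahn–Banach lemma: a subgradient of `γ` at `z` achieving the directional
derivative in direction `d`. -/
lemma exists_subgrad (hγ : IsGauge γ) (z d : X) :
    ∃ φ : X →ₗ[ℝ] ℝ, (∀ x, φ x ≤ γ x) ∧ φ z = γ z ∧ dirD γ z d ≤ φ d := by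
  set N : X → ℝ := dirD γ z with hN
  have N_hom : ∀ c : ℝ, 0 < c → ∀ x, N (c • x) = c * N x := fun c hc x => dirD_smul hγ z x hc
  have N_add : ∀ x y, N (x + y) ≤ N x + N y := fun x y => dirD_add hγ z x y
  have N_le : ∀ x, N x ≤ γ x := fun x => dirD_le_gauge hγ z x
  have N_z : N z = γ z := dirD_self hγ z
  have N_negz : N (-z) = -γ z := dirD_neg_self hγ z
  have N_zero : N 0 = 0 := dirD_zero hγ z
  have hmain : ∀ w : X, w ≠ 0 → N w ≥ -N (-w) →
      ∃ φ : X →ₗ[ℝ] ℝ, (∀ x, φ x ≤ N x) ∧ φ w = N w := by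
    intro w hw _
    set f := LinearPMap.mkSpanSingleton (K := ℝ) (L := ℝ) (σ := RingHom.id ℝ) w (N w) hw with hf
    have hdom : ∀ x : f.domain, f x ≤ N x := by
      rintro ⟨x, hx⟩
      rw [LinearPMap.domain_mkSpanSingleton] at hx
      obtain ⟨c, rfl⟩ := Submodule.mem_span_singleton.mp hx
      have happ : f ⟨c • w, hx⟩ = c • N w := LinearPMap.mkSpanSingleton'_apply _ _ _ c _
      rw [happ]
      rcases lt_trichotomy c 0 with hc | hc | hc
      · have h1 : N (c • w) = (-c) * N (-w) := by
          have : c • w = (-c) • (-w) := by module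
          rw [this, N_hom (-c) (by linarith)]
        rw [h1]
        have h2 : 0 ≤ N w + N (-w) := by
          have := N_add w (-w)
          simp only [add_neg_cancel, N_zero] at this
          linarith
        simp only [smul_eq_mul]
        nlinarith
      · subst hc; simp [N_zero]
      · rw [N_hom c hc]; simp [smul_eq_mul]
    obtain ⟨g, hg1, hg2⟩ := exists_extension_of_le_sublinear f N N_hom N_add hdom
    refine ⟨g, hg2, ?_⟩
    have hmem : w ∈ f.domain := by
      rw [LinearPMap.domain_mkSpanSingleton]
      exact Submodule.mem_span_singleton_self w
    have := hg1 ⟨w, hmem⟩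
    rw [LinearPMap.mkSpanSingleton_apply] at this
    simpa using this
  have hfix : ∀ φ : X →ₗ[ℝ] ℝ, (∀ x, φ x ≤ N x) → φ z = γ z := by
    intro φ hφ
    have h1 := hφ z
    have h2 := hφ (-z)
    rw [N_negz] at h2
    rw [map_neg] at h2
    rw [N_z] at h1
    linarith
  by_cases hd : d = 0
  · subst hd
    by_cases hz : z = 0
    · subst hz
      refine ⟨0, ?_, ?_, ?_⟩
      · intro x; simpa using hγ.1 x
      · simp [ggauge_zero hγ]
      · simpa [N_zero] using le_of_eq N_zero.symm ▸ (le_refl (0:ℝ))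
    · obtain ⟨φ, hφ1, _⟩ := hmain z hz (by rw [N_negz, N_z]; linarith)
      exact ⟨φ, fun x => (hφ1 x).trans (N_le x), hfix φ hφ1, by simp [N_zero]⟩
  · obtain ⟨φ, hφ1, hφ2⟩ := hmain d hd (by
      have := N_add d (-d)
      simp only [add_neg_cancel, N_zero] at this
      linarith)
    exact ⟨φ, fun x => (hφ1 x).trans (N_le x), hfix φ hφ1, hφ2.ge⟩

/-- If `φ ≤ γ` pointwise then the polar is at most 1. -/
lemma gaugePolar_le_one (hγ : IsGauge γ) {φ : X →ₗ[ℝ] ℝ} (h : ∀ x, φ x ≤ γ x) :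
    gaugePolar γ φ ≤ 1 := by
  refine Real.sSup_le ?_ one_pos.le
  rintro a ⟨x, hx, rfl⟩
  exact (h x).trans hx

lemma gaugePolar_bddAbove (hγ : IsGauge γ) {φ : X →ₗ[ℝ] ℝ} (h : ∀ x, φ x ≤ γ x) :
    BddAbove (φ '' {x | γ x ≤ 1}) := by
  refine ⟨1, ?_⟩
  rintro a ⟨x, hx, rfl⟩
  exact (h x).trans hx

/-- If the polar equals 1 then `φ ≤ γ` pointwise. -/
lemma le_gauge_of_polar_eq_one (hγ : IsGauge γ) {φ : X →ₗ[ℝ] ℝ}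
    (h : gaugePolar γ φ = 1) : ∀ x, φ x ≤ γ x := by
  intro x
  have hbdd : BddAbove (φ '' {x | γ x ≤ 1}) := by
    by_contra hb
    rw [gaugePolar, Real.sSup_of_not_bddAbove hb] at h
    norm_num at h
  by_cases hx : x = 0
  · subst hx; simp [ggauge_zero hγ]
  · have hpos : 0 < γ x := ggauge_pos hγ hx
    set u := (γ x)⁻¹ • x with hu
    have hγu : γ u = 1 := by
      rw [hu, hγ.2.2.1 _ _ (by positivity), inv_mul_cancel₀ hpos.ne']
    have hmem : φ u ∈ φ '' {x | γ x ≤ 1} := ⟨u, by simp [hγu], rfl⟩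
    have := le_csSup hbdd hmem
    rw [← gaugePolar, h] at this
    have h2 : φ u = (γ x)⁻¹ * φ x := by rw [hu, map_smul]; rfl
    rw [h2] at this
    calc φ x = γ x * ((γ x)⁻¹ * φ x) := by field_simp
      _ ≤ γ x * 1 := mul_le_mul_of_nonneg_left this hpos.le
      _ = γ x := mul_one _

/-- `φ` is norming for `z ≠ 0` iff `φ ≤ γ` and `φ z = γ z`. -/
lemma isNorming_iff (hγ : IsGauge γ) {φ : X →ₗ[ℝ] ℝ} {z : X} (hz : z ≠ 0) :
    IsNormingFunctional γ φ z ↔ (∀ x, φ x ≤ γ x) ∧ φ z = γ z := by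
  constructor
  · rintro ⟨h1, h2⟩
    exact ⟨le_gauge_of_polar_eq_one hγ h1, h2⟩
  · rintro ⟨h1, h2⟩
    refine ⟨le_antisymm (gaugePolar_le_one hγ h1) ?_, h2⟩
    have hpos : 0 < γ z := ggauge_pos hγ hz
    set u := (γ z)⁻¹ • z with hu
    have hγu : γ u = 1 := by
      rw [hu, hγ.2.2.1 _ _ (by positivity), inv_mul_cancel₀ hpos.ne']
    have hφu : φ u = 1 := by
      rw [hu, map_smul, smul_eq_mul, h2, inv_mul_cancel₀ hpos.ne']
    have hmem : φ u ∈ φ '' {x | γ x ≤ 1} := ⟨u, by simp [hγu], rfl⟩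
    have := le_csSup (gaugePolar_bddAbove hγ h1) hmem
    rwa [hφu] at this

end aux2

section aux3
variable {X : Type*} [NormedAddCommGroup X] [NormedSpace ℝ X] [FiniteDimensional ℝ X]
  {γ : X → ℝ}

lemma gauge_convexOn (hγ : IsGauge γ) : ConvexOn ℝ Set.univ γ := by
  refine ⟨convex_univ, fun x _ y _ a b ha hb hab => ?_⟩
  calc γ (a • x + b • y) ≤ γ (a • x) + γ (b • y) := hγ.2.2.2 _ _
    _ = a * γ x + b * γ y := by rw [hγ.2.2.1 _ _ ha, hγ.2.2.1 _ _ hb]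
    _ = a • γ x + b • γ y := rfl

lemma gauge_bound (hγ : IsGauge γ) : ∃ C : ℝ, 0 < C ∧ ∀ x, γ x ≤ C * ‖x‖ := by
  have hcont : Continuous γ := by
    have := (gauge_convexOn hγ).continuousOn isOpen_univ
    rwa [← continuousOn_univ]
  have h0 : ContinuousAt γ 0 := hcont.continuousAt
  rw [Metric.continuousAt_iff] at h0
  obtain ⟨δ, hδ, hball⟩ := h0 1 one_pos
  refine ⟨2 / δ, by positivity, fun x => ?_⟩
  by_cases hx : x = 0
  · subst hx; simp [ggauge_zero hγ]
  · have hxn : (0:ℝ) < ‖x‖ := norm_pos_iff.mpr hx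
    set c : ℝ := δ / (2 * ‖x‖) with hc
    have hcpos : 0 < c := by positivity
    have hnear : dist (c • x) 0 < δ := by
      have e : c * ‖x‖ = δ / 2 := by rw [hc]; field_simp
      rw [dist_zero_right, norm_smul, Real.norm_eq_abs, abs_of_pos hcpos, e]
      linarith
    have := hball hnear
    rw [Real.dist_eq, ggauge_zero hγ, sub_zero] at this
    have h1 : γ (c • x) < 1 := (le_abs_self _).trans_lt this
    rw [hγ.2.2.1 _ _ hcpos.le] at h1
    have h2 : γ x < 1 / c := by
      rw [lt_div_iff₀ hcpos, mul_comm]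
      exact h1
    have h3 : 1 / c = 2 / δ * ‖x‖ := by
      rw [hc]; field_simp
    rw [h3] at h2
    exact h2.le

end aux3

/-- A point `xbar` outside `{p₁, …, pₙ}` minimizes `x ↦ ∑ γ(pᵢ - x)` iff there are
`γ`-norming functionals `φᵢ` of `pᵢ - xbar` summing to zero. -/
theorem fermatTorricelli_minimum_iff_norming_functionals
    {X : Type*} [NormedAddCommGroup X] [NormedSpace ℝ X] [FiniteDimensional ℝ X]
    (γ : X → ℝ) (hγ : IsGauge γ) {n : ℕ} (p : Fin n → X) (xbar : X)
    (hxbar : ∀ i, xbar ≠ p i) :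
    (∀ y : X, ∑ i, γ (p i - xbar) ≤ ∑ i, γ (p i - y)) ↔
      ∃ φ : Fin n → (X →ₗ[ℝ] ℝ),
        (∀ i, IsNormingFunctional γ (φ i) (p i - xbar)) ∧ ∑ i, φ i = 0 := by
  have hz : ∀ i, p i - xbar ≠ 0 := fun i => sub_ne_zero.mpr fun h => hxbar i h.symm
  constructor
  · -- hard direction
    intro hmin
    set z : Fin n → X := fun i => p i - xbar with hzdef
    set T : Fin n → Set (X →L[ℝ] ℝ) :=
      fun i => {φ | (∀ x, φ x ≤ γ x) ∧ φ (z i) = γ (z i)} with hT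
    set S : Set (X →L[ℝ] ℝ) :=
      (fun f : Fin n → (X →L[ℝ] ℝ) => ∑ i, f i) '' Set.univ.pi T with hS
    have h0S : (0 : X →L[ℝ] ℝ) ∈ S := by
      by_contra h0S
      obtain ⟨C, hC, hCb⟩ := gauge_bound hγ
      -- T i is compact
      have hTcp : ∀ i, IsCompact (T i) := by
        intro i
        apply Metric.isCompact_of_isClosed_isBounded
        · have : T i = (⋂ x : X, {φ : X →L[ℝ] ℝ | φ x ≤ γ x}) ∩
              {φ : X →L[ℝ] ℝ | φ (z i) = γ (z i)} := by
            ext φ; simp [hT, Set.mem_iInter]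
          rw [this]
          refine IsClosed.inter (isClosed_iInter fun x => ?_) ?_
          · exact isClosed_le (ContinuousLinearMap.apply ℝ ℝ x).continuous continuous_const
          · exact isClosed_eq (ContinuousLinearMap.apply ℝ ℝ (z i)).continuous continuous_const
        · rw [isBounded_iff_forall_norm_le]
          refine ⟨C, fun φ hφ => ?_⟩
          refine ContinuousLinearMap.opNorm_le_bound φ hC.le fun x => ?_
          rw [Real.norm_eq_abs, abs_le]
          constructor
          · have := hφ.1 (-x)
            rw [map_neg] at this
            have h2 := hCb (-x)
            rw [norm_neg] at h2
            linarith
          · exact (hφ.1 x).trans (hCb x)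
      have hScp : IsCompact S :=
        (isCompact_univ_pi hTcp).image (continuous_finset_sum _ fun i _ => continuous_apply i)
      have hScv : Convex ℝ S := by
        rintro ψ ⟨f, hf, rfl⟩ ψ' ⟨g, hg, rfl⟩ a b ha hb hab
        refine ⟨fun i => a • f i + b • g i, fun i _ => ?_, ?_⟩
        · have hfi := hf i (Set.mem_univ i)
          have hgi := hg i (Set.mem_univ i)
          constructor
          · intro x
            have h1 : (a • f i + b • g i) x = a * f i x + b * g i x := by
              simp [ContinuousLinearMap.add_apply, ContinuousLinearMap.smul_apply, smul_eq_mul]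
            rw [h1]
            have e1 := mul_le_mul_of_nonneg_left (hfi.1 x) ha
            have e2 := mul_le_mul_of_nonneg_left (hgi.1 x) hb
            have e3 : a * γ x + b * γ x = γ x := by rw [← add_mul, hab, one_mul]
            linarith
          · have h1 : (a • f i + b • g i) (z i) = a * f i (z i) + b * g i (z i) := by
              simp [ContinuousLinearMap.add_apply, ContinuousLinearMap.smul_apply, smul_eq_mul]
            rw [h1, hfi.2, hgi.2, ← add_mul, hab, one_mul]
        · simp only [Finset.sum_add_distrib, ← Finset.smul_sum]
      obtain ⟨Λ, u, hΛS, hΛ0⟩ := geometric_hahn_banach_closed_point hScv hScp.isClosed h0S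
      rw [map_zero] at hΛ0
      -- find the direction d
      set L : Module.Dual ℝ X →ₗ[ℝ] ℝ :=
        Λ.toLinearMap ∘ₗ
          (LinearMap.toContinuousLinearMap : (X →ₗ[ℝ] ℝ) ≃ₗ[ℝ] (X →L[ℝ] ℝ)).toLinearMap with hL
      obtain ⟨d, hd⟩ := (Module.evalEquiv ℝ X).surjective L
      have hΛd : ∀ φ : X →L[ℝ] ℝ, Λ φ = φ d := by
        intro φ
        have h1 : LinearMap.toContinuousLinearMap (φ : X →ₗ[ℝ] ℝ) = φ := by
          ext x
          exact congrFun (LinearMap.coe_toContinuousLinearMap' (φ : X →ₗ[ℝ] ℝ)) x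
        have h2 : L (φ : X →ₗ[ℝ] ℝ) = Λ φ := by
          simp only [hL, LinearMap.coe_comp, Function.comp_apply, LinearEquiv.coe_coe,
            ContinuousLinearMap.coe_coe, h1]
        have h3 : L (φ : X →ₗ[ℝ] ℝ) = (φ : X →ₗ[ℝ] ℝ) d := by
          rw [← hd]
          rfl
        rw [← h2, h3]
        rfl
      -- minimality gives nonneg sum of directional derivatives
      have hsum0 : 0 ≤ ∑ i, dirD γ (z i) d := by
        by_contra hneg
        push_neg at hneg
        rcases Nat.eq_zero_or_pos n with hn | hn
        · subst hn; simp at hneg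
        have : Nonempty (Fin n) := Fin.pos_iff_nonempty.mp hn
        set ε : ℝ := -(∑ i, dirD γ (z i) d) with hε
        have hεpos : 0 < ε := by rw [hε]; linarith
        have hex : ∀ i, ∃ t, 0 < t ∧ gq γ (z i) d t < dirD γ (z i) d + ε / n := by
          intro i
          obtain ⟨a, ⟨t, htpos, rfl⟩, hlt⟩ := exists_lt_of_csInf_lt dirD_ne
            (show dirD γ (z i) d < dirD γ (z i) d + ε / n by
              have : (0:ℝ) < ε / n := by positivity
              linarith)
          exact ⟨t, htpos, hlt⟩
        choose t ht hqt using hex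
        set r := Finset.univ.inf' Finset.univ_nonempty t with hr
        have hrpos : 0 < r := by
          rw [hr, Finset.lt_inf'_iff]
          exact fun i _ => ht i
        have hq : ∀ i, gq γ (z i) d r ≤ gq γ (z i) d (t i) := fun i =>
          gq_mono hγ _ _ hrpos (Finset.inf'_le t (Finset.mem_univ i))
        have hminr : 0 ≤ ∑ i, gq γ (z i) d r := by
          have h1 := hmin (xbar - r • d)
          have h2 : ∀ i, p i - (xbar - r • d) = z i + r • d := by
            intro i
            rw [hzdef]
            module
          have h3 : 0 ≤ ∑ i, (γ (z i + r • d) - γ (z i)) := by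
            rw [Finset.sum_sub_distrib]
            have h4 : ∑ i, γ (p i - (xbar - r • d)) = ∑ i, γ (z i + r • d) := by
              refine Finset.sum_congr rfl fun i _ => ?_
              rw [h2 i]
            rw [← h4]
            have h5 : ∑ i, γ (p i - xbar) = ∑ i, γ (z i) := rfl
            rw [← h5]
            linarith
          have h6 : ∑ i, gq γ (z i) d r = (∑ i, (γ (z i + r • d) - γ (z i))) / r := by
            rw [Finset.sum_div]; rfl
          rw [h6]
          positivity
        have hlt : ∑ i, gq γ (z i) d r < ∑ i, (dirD γ (z i) d + ε / n) :=
          Finset.sum_lt_sum_of_nonempty Finset.univ_nonempty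
            fun i _ => (hq i).trans_lt (hqt i)
        rw [Finset.sum_add_distrib, Finset.sum_const, Finset.card_univ, Fintype.card_fin,
          nsmul_eq_mul] at hlt
        have hn' : (n:ℝ) ≠ 0 := by positivity
        rw [mul_div_cancel₀ _ hn'] at hlt
        rw [hε] at hlt
        linarith
      -- construct the contradiction
      choose φ hφ1 hφ2 hφ3 using fun i => exists_subgrad hγ (z i) d
      set ψ : X →L[ℝ] ℝ := ∑ i, LinearMap.toContinuousLinearMap (φ i) with hψ
      have hψS : ψ ∈ S := by
        refine ⟨fun i => LinearMap.toContinuousLinearMap (φ i), fun i _ => ?_, rfl⟩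
        constructor
        · intro x
          have : LinearMap.toContinuousLinearMap (φ i) x = φ i x :=
            congrFun (LinearMap.coe_toContinuousLinearMap' (φ i)) x
          rw [this]
          exact hφ1 i x
        · have : LinearMap.toContinuousLinearMap (φ i) (z i) = φ i (z i) :=
            congrFun (LinearMap.coe_toContinuousLinearMap' (φ i)) (z i)
          rw [this]
          exact hφ2 i
      have hΛψ := hΛS ψ hψS
      have hψd : Λ ψ = ∑ i, φ i d := by
        rw [hΛd ψ, hψ, ContinuousLinearMap.sum_apply]
        refine Finset.sum_congr rfl fun i _ => ?_
        exact congrFun (LinearMap.coe_toContinuousLinearMap' (φ i)) d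
      have hge : 0 ≤ Λ ψ := by
        rw [hψd]
        calc (0:ℝ) ≤ ∑ i, dirD γ (z i) d := hsum0
          _ ≤ ∑ i, φ i d := Finset.sum_le_sum fun i _ => hφ3 i
      linarith
    -- extract the functionals
    obtain ⟨f, hf, hfsum⟩ := h0S
    refine ⟨fun i => (f i : X →ₗ[ℝ] ℝ), fun i => ?_, ?_⟩
    · have hfi := hf i (Set.mem_univ i)
      exact (isNorming_iff hγ (hz i)).mpr ⟨fun x => hfi.1 x, hfi.2⟩
    · ext x
      have hfsum' : (∑ i, f i) = 0 := hfsum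
      have : (∑ i, f i) x = 0 := by rw [hfsum']; rfl
      simpa [ContinuousLinearMap.sum_apply] using this
  · -- easy direction
    rintro ⟨φ, hφ, hsum⟩ y
    have hle : ∀ i x, φ i x ≤ γ x := fun i => le_gauge_of_polar_eq_one hγ (hφ i).1
    have heq : ∀ i, φ i (p i - xbar) = γ (p i - xbar) := fun i => (hφ i).2
    calc ∑ i, γ (p i - xbar) = ∑ i, φ i (p i - xbar) := by
          refine Finset.sum_congr rfl fun i _ => (heq i).symm
      _ = ∑ i, (φ i (p i - y) + φ i (y - xbar)) := by
          refine Finset.sum_congr rfl fun i _ => ?_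
          rw [← map_add]
          congr 1
          abel
      _ = ∑ i, φ i (p i - y) + (∑ i, φ i) (y - xbar) := by
          rw [Finset.sum_add_distrib, LinearMap.sum_apply]
      _ = ∑ i, φ i (p i - y) := by rw [hsum]; simp
      _ ≤ ∑ i, γ (p i - y) := Finset.sum_le_sum fun i _ => hle i _
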